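/- arXiv:1609.03640 — 2 statements merged into one kernel-verified Lean document; each statement's English description precedes it below -/
import Mathlib

section
/- One-step confluence implies all maximal reduction sequences to a normal form have the same length: if R has the strong diamond property (a R b → a R c → b = c ∨ ∃ d, b R d ∧ c R d), and there are reduction sequences of lengths m and n from a to a normal form, then m = n. -/
inductive ReachN {α : Type*} (R : α → α → Prop) : α → ℕ → α → Prop
  | refl (a : α) : ReachN R a 0 a
  | step {a b c : α} {n : ℕ} : R a b → ReachN R b n c → ReachN R a (n + 1) c

lemma ReachN.shift {α : Type*} {R : α → α → Prop}
    (hd : ∀ a b c, R a b → R a c → b = c ∨ ∃ d, R b d ∧ R c d) :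
    ∀ {m : ℕ} {x y b : α}, ReachN R x m b → (∀ d, ¬ R b d) → R x y →
      ∃ m', m = m' + 1 ∧ ReachN R y m' b := by
  intro m
  induction m with
  | zero =>
    intro x y b h hb hxy
    cases h
    exact absurd hxy (hb _)
  | succ k ih =>
    intro x y b h hb hxy
    cases h with
    | step hxz hzb =>
      rcases hd _ _ _ hxy hxz with rfl | ⟨d, hyd, hzd⟩
      · exact ⟨k, rfl, hzb⟩
      · obtain ⟨k', rfl, hdb⟩ := ih hzb hb hzd
        exact ⟨k' + 1, rfl, .step hyd hdb⟩

theorem diamond_same_length {α : Type*} (R : α → α → Prop)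
    (hd : ∀ a b c, R a b → R a c → b = c ∨ ∃ d, R b d ∧ R c d)
    (a b c : α) (m n : ℕ)
    (hab : ReachN R a m b) (hac : ReachN R a n c)
    (hb : ∀ d, ¬ R b d) (hc : ∀ d, ¬ R c d) : m = n := by
  induction m using Nat.strong_induction_on generalizing a n with
  | _ m ih =>
    cases hab with
    | refl =>
      cases hac with
      | refl => rfl
      | step h _ => exact absurd h (hb _)
    | @step _ b₁ _ k h1 hr1 =>
      cases hac with
      | refl => exact absurd h1 (hc _)
      | @step _ c₁ _ l h2 hr2 =>
        rcases hd _ _ _ h1 h2 with rfl | ⟨d, hbd, hcd⟩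
        · exact congrArg (· + 1) (ih k (by omega) _ _ hr1 hr2)
        · obtain ⟨k', rfl, hdb⟩ := ReachN.shift hd hr1 hb hbd
          obtain ⟨l', rfl, hdc⟩ := ReachN.shift hd hr2 hc hcd
          have := ih k' (by omega) _ _ hdb hdc
          omega
end

section
/- The stateless running-total network with feedback is equivalent to the stateful one: the stream W defined by W = 0 ::ₛ zipWith (+) U W satisfies zipWith (+) U W = out 0 U, where out is the stateful running-total process. -/
theorem feedback_running_total (out : ℕ → Stream' ℕ → Stream' ℕ)
    (hout : ∀ x S, out x S = Stream'.cons (x + S.head) (out (x + S.head) S.tail))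
    (U W : Stream' ℕ)
    (hW1 : W.head = 0) (hW2 : W.tail = Stream'.zip (· + ·) U W)
    (n : ℕ) :
    (Stream'.zip (· + ·) U W).get n = (out 0 U).get n := by
  have key : ∀ n : ℕ, ∀ x : ℕ, ∀ U W : Stream' ℕ, W.head = x →
      W.tail = Stream'.zip (· + ·) U W →
      (Stream'.zip (· + ·) U W).get n = (out x U).get n := by
    intro n
    induction n with
    | zero =>
      intro x U W h1 h2
      rw [hout]
      simp [Stream'.zip, Stream'.get, Stream'.head, Stream'.cons] at *
      omega
    | succ n ih =>
      intro x U W h1 h2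
      rw [hout]
      have hget : (Stream'.zip (· + ·) U W).get (n+1)
          = (Stream'.zip (· + ·) U.tail W.tail).get n := by
        simp [Stream'.zip, Stream'.get, Stream'.tail]
      rw [hget, Stream'.get_succ_cons]
      apply ih
      · have := congrFun h2 0
        simp [Stream'.zip, Stream'.get, Stream'.tail, Stream'.head] at *
        omega
      · ext k
        have := congrFun h2 (k+1)
        have h0 := congrFun h2 k
        simp [Stream'.zip, Stream'.get, Stream'.tail] at *
        omega
  exact key n 0 U W hW1 hW2
end
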